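/- Let 1 → N → G →^ψ G̃ → 1 be a central extension of groups (so N = ker ψ is contained in the center of G). Let n ≥ 3 and let ρ, ρ' : B_n → G be two homomorphisms from the braid group with ψ∘ρ = ψ∘ρ'. Then there exists a central element τ ∈ N such that ρ'(σ_i) = τ·ρ(σ_i) for all 1 ≤ i ≤ n−1. -/

import Mathlib

/-- The braid relations on `m` generators. -/
def braidRels (m : ℕ) : Set (FreeGroup (Fin m)) :=
  {r | ∃ i j : Fin m, (i : ℕ) + 2 ≤ (j : ℕ) ∧
      r = FreeGroup.of i * FreeGroup.of j * (FreeGroup.of i)⁻¹ * (FreeGroup.of j)⁻¹} ∪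
  {r | ∃ i j : Fin m, (i : ℕ) + 1 = (j : ℕ) ∧
      r = FreeGroup.of i * FreeGroup.of j * FreeGroup.of i *
        (FreeGroup.of j * FreeGroup.of i * FreeGroup.of j)⁻¹}

/-- The braid group on `n` strands, with `n - 1` standard generators. -/
abbrev BraidGroup (n : ℕ) := PresentedGroup (braidRels (n - 1))

/-- The standard generator `σ_{i+1}` of the braid group (0-indexed: `braidGen i = σ_{i+1}`). -/
def braidGen {n : ℕ} (i : Fin (n - 1)) : BraidGroup n := PresentedGroup.of i

lemma braid_rel_adj {n : ℕ} (i j : Fin (n - 1)) (hij : (i : ℕ) + 1 = (j : ℕ)) :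
    braidGen (n := n) i * braidGen j * braidGen i = braidGen j * braidGen i * braidGen j := by
  have hr : (FreeGroup.of i * FreeGroup.of j * FreeGroup.of i *
      (FreeGroup.of j * FreeGroup.of i * FreeGroup.of j)⁻¹) ∈ braidRels (n - 1) :=
    Or.inr ⟨i, j, hij, rfl⟩
  have h1 : (QuotientGroup.mk (FreeGroup.of i * FreeGroup.of j * FreeGroup.of i *
      (FreeGroup.of j * FreeGroup.of i * FreeGroup.of j)⁻¹) : BraidGroup n) = 1 :=
    (QuotientGroup.eq_one_iff _).mpr (Subgroup.subset_normalClosure hr)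
  have h2 : braidGen (n := n) i * braidGen j * braidGen i *
      (braidGen j * braidGen i * braidGen j)⁻¹ = 1 := by
    exact h1
  have := mul_eq_one_iff_eq_inv.mp h2
  simpa using this

theorem stmt_5 (n : ℕ) (hn : 3 ≤ n) {G G' : Type*} [Group G] [Group G']
    (ψ : G →* G') (hsurj : Function.Surjective ψ) (hcentral : ψ.ker ≤ Subgroup.center G)
    (ρ ρ' : BraidGroup n →* G) (h : ψ.comp ρ = ψ.comp ρ') :
    ∃ τ ∈ ψ.ker, ∀ i : Fin (n - 1), ρ' (braidGen i) = τ * ρ (braidGen i) := by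
  -- the defect map
  set f : BraidGroup n → G := fun g => ρ' g * (ρ g)⁻¹ with hf
  have hker : ∀ g, f g ∈ ψ.ker := by
    intro g
    have hg := DFunLike.congr_fun h g
    simp only [MonoidHom.comp_apply] at hg
    simp [MonoidHom.mem_ker, hf, hg]
  have hcomm : ∀ g (x : G), f g * x = x * f g := fun g x =>
    ((Subgroup.mem_center_iff.mp (hcentral (hker g))) x).symm
  -- f is multiplicative (it lands in the center)
  have hmul : ∀ g₁ g₂, f (g₁ * g₂) = f g₁ * f g₂ := by
    intro g₁ g₂
    have e1 : f (g₁ * g₂) = ρ' g₁ * f g₂ * (ρ g₁)⁻¹ := by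
      simp [hf, mul_assoc]
    rw [e1, ← hcomm g₂ (ρ' g₁), mul_assoc]
    exact hcomm g₂ (f g₁)
  -- adjacent generators have equal defects
  have hadj : ∀ i j : Fin (n - 1), (i : ℕ) + 1 = (j : ℕ) →
      f (braidGen i) = f (braidGen j) := by
    intro i j hij
    have hb := congrArg f (braid_rel_adj i j hij)
    rw [hmul, hmul, hmul, hmul] at hb
    -- hb : f σi * f σj * f σi = f σj * f σi * f σj
    set x := f (braidGen i)
    set y := f (braidGen j)
    have hxy : x * y = y * x := hcomm (braidGen i) y
    have : x * (y * x) = y * (y * x) := by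
      calc x * (y * x) = x * y * x := (mul_assoc x y x).symm
        _ = y * x * y := hb
        _ = y * (x * y) := mul_assoc y x y
        _ = y * (y * x) := by rw [hxy]
    exact mul_right_cancel this
  have h0 : 0 < n - 1 := by omega
  have hall : ∀ i : Fin (n - 1), f (braidGen i) = f (braidGen ⟨0, h0⟩) := by
    intro i
    obtain ⟨k, hk⟩ := i
    induction k with
    | zero => rfl
    | succ m ih =>
      have hm : m < n - 1 := by omega
      rw [← hadj ⟨m, hm⟩ ⟨m + 1, hk⟩ rfl]
      exact ih hm
  refine ⟨f (braidGen ⟨0, h0⟩), hker _, fun i => ?_⟩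
  rw [← hall i]
  simp [hf]
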